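/- Let f₁, f₂ be holomorphic injective maps on the unit disk with disjoint images, normalized by f₁(0)=0, f₁'(0)=1, f₂(0)=1. Suppose g₁, g₂ are another such normalized pair with the same cross-kernels: f₁'(ζ)f₂'(z)/(f₁(ζ)−f₂(z))² = g₁'(ζ)g₂'(z)/(g₁(ζ)−g₂(z))² and symmetrically, and the same diagonal Grunsky kernels 1/(ζ−z)² − f_i'(ζ)f_i'(z)/(f_i(ζ)−f_i(z))² = 1/(ζ−z)² − g_i'(ζ)g_i'(z)/(g_i(ζ)−g_i(z))² for i=1,2. Then from these kernels one recovers f₂'(0), f₂''(0), f₁''(0), and the Schwarzians S(f₁), S(f₂); in particular f₁ = g₁ and f₂ = g₂. -/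

import Mathlib

open Complex

/-- Two functions on an open convex set with the same derivative and the same value at one
point agree on the set. -/
lemma eqOn_of_hasDerivAt_eq {s : Set ℂ} (hso : IsOpen s) (hsc : Convex ℝ s)
    {F G d : ℂ → ℂ} (hF : ∀ x ∈ s, HasDerivAt F (d x) x)
    (hG : ∀ x ∈ s, HasDerivAt G (d x) x)
    {x₀ : ℂ} (hx₀ : x₀ ∈ s) (h0 : F x₀ = G x₀) : Set.EqOn F G s := by
  refine hsc.eqOn_of_fderivWithin_eq
    (fun x hx => ((hF x hx).differentiableAt).differentiableWithinAt)
    (fun x hx => ((hG x hx).differentiableAt).differentiableWithinAt)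
    hso.uniqueDiffOn (fun x hx => ?_) hx₀ h0
  rw [fderivWithin_of_isOpen hso hx, fderivWithin_of_isOpen hso hx,
    (hF x hx).hasFDerivAt.fderiv, (hG x hx).hasFDerivAt.fderiv]

/-- A normalized pair of non-overlapping univalent maps on the unit disk is uniquely
determined by its Grunsky kernels: equality of the cross-kernels and of the diagonal
Grunsky kernels forces `f₁ = g₁` and `f₂ = g₂`. -/
theorem grunsky_kernels_determine_pair
    (f₁ f₂ g₁ g₂ : ℂ → ℂ)
    (hf₁ : DifferentiableOn ℂ f₁ (Metric.ball (0 : ℂ) 1))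
    (hf₂ : DifferentiableOn ℂ f₂ (Metric.ball (0 : ℂ) 1))
    (hg₁ : DifferentiableOn ℂ g₁ (Metric.ball (0 : ℂ) 1))
    (hg₂ : DifferentiableOn ℂ g₂ (Metric.ball (0 : ℂ) 1))
    (hif₁ : Set.InjOn f₁ (Metric.ball (0 : ℂ) 1))
    (hif₂ : Set.InjOn f₂ (Metric.ball (0 : ℂ) 1))
    (hig₁ : Set.InjOn g₁ (Metric.ball (0 : ℂ) 1))
    (hig₂ : Set.InjOn g₂ (Metric.ball (0 : ℂ) 1))
    (hdisjf : Disjoint (f₁ '' Metric.ball (0 : ℂ) 1) (f₂ '' Metric.ball (0 : ℂ) 1))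
    (hdisjg : Disjoint (g₁ '' Metric.ball (0 : ℂ) 1) (g₂ '' Metric.ball (0 : ℂ) 1))
    (hnf₁0 : f₁ 0 = 0) (hnf₁' : deriv f₁ 0 = 1) (hnf₂0 : f₂ 0 = 1)
    (hng₁0 : g₁ 0 = 0) (hng₁' : deriv g₁ 0 = 1) (hng₂0 : g₂ 0 = 1)
    (hcross12 : ∀ ζ ∈ Metric.ball (0 : ℂ) 1, ∀ z ∈ Metric.ball (0 : ℂ) 1,
      deriv f₁ ζ * deriv f₂ z / (f₁ ζ - f₂ z) ^ 2
        = deriv g₁ ζ * deriv g₂ z / (g₁ ζ - g₂ z) ^ 2)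
    (hcross21 : ∀ ζ ∈ Metric.ball (0 : ℂ) 1, ∀ z ∈ Metric.ball (0 : ℂ) 1,
      deriv f₂ ζ * deriv f₁ z / (f₂ ζ - f₁ z) ^ 2
        = deriv g₂ ζ * deriv g₁ z / (g₂ ζ - g₁ z) ^ 2)
    (hdiag1 : ∀ ζ ∈ Metric.ball (0 : ℂ) 1, ∀ z ∈ Metric.ball (0 : ℂ) 1, ζ ≠ z →
      1 / (ζ - z) ^ 2 - deriv f₁ ζ * deriv f₁ z / (f₁ ζ - f₁ z) ^ 2
        = 1 / (ζ - z) ^ 2 - deriv g₁ ζ * deriv g₁ z / (g₁ ζ - g₁ z) ^ 2)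
    (hdiag2 : ∀ ζ ∈ Metric.ball (0 : ℂ) 1, ∀ z ∈ Metric.ball (0 : ℂ) 1, ζ ≠ z →
      1 / (ζ - z) ^ 2 - deriv f₂ ζ * deriv f₂ z / (f₂ ζ - f₂ z) ^ 2
        = 1 / (ζ - z) ^ 2 - deriv g₂ ζ * deriv g₂ z / (g₂ ζ - g₂ z) ^ 2) :
    Set.EqOn f₁ g₁ (Metric.ball (0 : ℂ) 1) ∧
      Set.EqOn f₂ g₂ (Metric.ball (0 : ℂ) 1) := by
  set B : Set ℂ := Metric.ball (0 : ℂ) 1 with hB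
  have hBo : IsOpen B := Metric.isOpen_ball
  have hBc : Convex ℝ B := convex_ball 0 1
  have h0B : (0 : ℂ) ∈ B := by simp [hB]
  -- `0 = f₁ 0` is in the image of `f₁`, hence `f₂` never vanishes on `B`; same for `g₂`.
  have hf₂ne : ∀ x ∈ B, f₂ x ≠ 0 := fun x hx h =>
    (Set.disjoint_left.mp hdisjf ⟨0, h0B, hnf₁0⟩) ⟨x, hx, h⟩
  have hg₂ne : ∀ x ∈ B, g₂ x ≠ 0 := fun x hx h =>
    (Set.disjoint_left.mp hdisjg ⟨0, h0B, hng₁0⟩) ⟨x, hx, h⟩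
  -- `HasDerivAt` facts on the open ball.
  have hdf₁ : ∀ x ∈ B, HasDerivAt f₁ (deriv f₁ x) x := fun x hx =>
    (hf₁.differentiableAt (hBo.mem_nhds hx)).hasDerivAt
  have hdf₂ : ∀ x ∈ B, HasDerivAt f₂ (deriv f₂ x) x := fun x hx =>
    (hf₂.differentiableAt (hBo.mem_nhds hx)).hasDerivAt
  have hdg₁ : ∀ x ∈ B, HasDerivAt g₁ (deriv g₁ x) x := fun x hx =>
    (hg₁.differentiableAt (hBo.mem_nhds hx)).hasDerivAt
  have hdg₂ : ∀ x ∈ B, HasDerivAt g₂ (deriv g₂ x) x := fun x hx =>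
    (hg₂.differentiableAt (hBo.mem_nhds hx)).hasDerivAt
  -- Step 1: `f₂ = g₂` on `B`, from the cross kernel `hcross21` evaluated at `z = 0`.
  have key2 : ∀ x ∈ B, deriv f₂ x / (f₂ x) ^ 2 = deriv g₂ x / (g₂ x) ^ 2 := by
    intro x hx
    have := hcross21 x hx 0 h0B
    simpa [hnf₁0, hnf₁', hng₁0, hng₁'] using this
  have hF2 : ∀ x ∈ B, HasDerivAt (fun y => (f₂ y)⁻¹) (-(deriv f₂ x / (f₂ x) ^ 2)) x := by
    intro x hx
    simpa [neg_div, Pi.inv_def] using (hdf₂ x hx).inv (hf₂ne x hx)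
  have hG2 : ∀ x ∈ B, HasDerivAt (fun y => (g₂ y)⁻¹) (-(deriv f₂ x / (f₂ x) ^ 2)) x := by
    intro x hx
    simpa [neg_div, key2 x hx, Pi.inv_def] using (hdg₂ x hx).inv (hg₂ne x hx)
  have hinv2 : Set.EqOn (fun y => (f₂ y)⁻¹) (fun y => (g₂ y)⁻¹) B :=
    eqOn_of_hasDerivAt_eq hBo hBc hF2 hG2 h0B (by simp [hnf₂0, hng₂0])
  have heq2 : Set.EqOn f₂ g₂ B := fun x hx => inv_inj.mp (hinv2 hx)
  -- Step 2: find a point where `deriv f₂` is nonzero.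
  have hhalfB : (1 / 2 : ℂ) ∈ B := by
    simp only [hB, Metric.mem_ball, dist_zero_right]
    rw [show ((1 / 2 : ℂ)) = ((1 / 2 : ℝ) : ℂ) by norm_num, Complex.norm_real]
    norm_num
  obtain ⟨z₀, hz₀, hb⟩ : ∃ z₀ ∈ B, deriv f₂ z₀ ≠ 0 := by
    by_contra h
    push_neg at h
    have hconst : Set.EqOn f₂ (fun _ => f₂ 0) B := by
      refine eqOn_of_hasDerivAt_eq (d := fun _ => (0 : ℂ)) hBo hBc
        (fun x hx => h x hx ▸ hdf₂ x hx) (fun x hx => hasDerivAt_const x _) h0B rfl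
    have : (1 / 2 : ℂ) = 0 := hif₂ hhalfB h0B (by rw [hconst hhalfB, hconst h0B])
    norm_num at this
  set w : ℂ := f₂ z₀ with hw
  have hgw : g₂ z₀ = w := (heq2 hz₀).symm
  have hb' : deriv g₂ z₀ = deriv f₂ z₀ :=
    (Filter.EventuallyEq.deriv_eq
      ((Filter.eventuallyEq_of_mem (hBo.mem_nhds hz₀) heq2))).symm
  -- `w` is not in the image of `f₁` nor of `g₁`.
  have hf₁w : ∀ ζ ∈ B, f₁ ζ - w ≠ 0 := by
    intro ζ hζ h
    exact (Set.disjoint_left.mp hdisjf ⟨ζ, hζ, sub_eq_zero.mp h⟩) ⟨z₀, hz₀, rfl⟩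
  have hg₁w : ∀ ζ ∈ B, g₁ ζ - w ≠ 0 := by
    intro ζ hζ h
    exact (Set.disjoint_left.mp hdisjg ⟨ζ, hζ, sub_eq_zero.mp h⟩) ⟨z₀, hz₀, hgw⟩
  -- Step 3: the cross kernel `hcross12` at `z = z₀`, with `deriv f₂ z₀` cancelled.
  have key1 : ∀ ζ ∈ B, deriv f₁ ζ / (f₁ ζ - w) ^ 2 = deriv g₁ ζ / (g₁ ζ - w) ^ 2 := by
    intro ζ hζ
    have h := hcross12 ζ hζ z₀ hz₀
    rw [hb', hgw] at h
    rw [mul_comm (deriv f₁ ζ) (deriv f₂ z₀), mul_div_assoc,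
      mul_comm (deriv g₁ ζ) (deriv f₂ z₀), mul_div_assoc] at h
    exact mul_left_cancel₀ hb h
  have hF1 : ∀ x ∈ B, HasDerivAt (fun y => (f₁ y - w)⁻¹)
      (-(deriv f₁ x / (f₁ x - w) ^ 2)) x := by
    intro x hx
    simpa [neg_div, Pi.inv_def] using ((hdf₁ x hx).sub_const w).inv (hf₁w x hx)
  have hG1 : ∀ x ∈ B, HasDerivAt (fun y => (g₁ y - w)⁻¹)
      (-(deriv f₁ x / (f₁ x - w) ^ 2)) x := by
    intro x hx
    simpa [neg_div, key1 x hx, Pi.inv_def] using ((hdg₁ x hx).sub_const w).inv (hg₁w x hx)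
  have hinv1 : Set.EqOn (fun y => (f₁ y - w)⁻¹) (fun y => (g₁ y - w)⁻¹) B :=
    eqOn_of_hasDerivAt_eq hBo hBc hF1 hG1 h0B (by simp [hnf₁0, hng₁0])
  have heq1 : Set.EqOn f₁ g₁ B := by
    intro x hx
    have := inv_inj.mp (hinv1 hx)
    exact sub_left_injective this
  exact ⟨heq1, heq2⟩
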